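/- Let V be a vector space over a field F, and let B₁, B₂ : V × V → V be bilinear alternating maps, each satisfying the Jacobi identity. Suppose that for one particular pair λ₁, λ₂ ∈ F with λ₁ ≠ 0 and λ₂ ≠ 0 the bracket λ₁B₁ + λ₂B₂ also satisfies the Jacobi identity. Then for every μ₁, μ₂ ∈ F the bracket μ₁B₁ + μ₂B₂ satisfies the Jacobi identity. -/
import Mathlib


/-- `B` satisfies the Jacobi identity. -/
def JacobiId {K V : Type*} [Field K] [AddCommGroup V] [Module K V]
    (B : V →ₗ[K] V →ₗ[K] V) : Prop :=
  ∀ f g h, B (B f g) h + B (B g h) f + B (B h f) g = 0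

/-- if `B₁`, `B₂` and one genuine linear combination `λ₁B₁ + λ₂B₂`
(with `λ₁ ≠ 0`, `λ₂ ≠ 0`) satisfy the Jacobi identity, then every linear
combination `μ₁B₁ + μ₂B₂` does. -/
theorem pencil_jacobi_of_one_combination
    {K V : Type*} [Field K] [AddCommGroup V] [Module K V]
    (B₁ B₂ : V →ₗ[K] V →ₗ[K] V)
    (halt₁ : ∀ f, B₁ f f = 0) (halt₂ : ∀ f, B₂ f f = 0)
    (hjac₁ : JacobiId B₁) (hjac₂ : JacobiId B₂)
    (l₁ l₂ : K) (hl₁ : l₁ ≠ 0) (hl₂ : l₂ ≠ 0)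
    (hjac : JacobiId (l₁ • B₁ + l₂ • B₂)) :
    ∀ m₁ m₂ : K, JacobiId (m₁ • B₁ + m₂ • B₂) := by
  have key : ∀ f g h : V,
      B₁ (B₂ f g) h + B₂ (B₁ f g) h + (B₁ (B₂ g h) f + B₂ (B₁ g h) f)
        + (B₁ (B₂ h f) g + B₂ (B₁ h f) g) = 0 := by
    intro f g h
    have H := hjac f g h
    have h1 := hjac₁ f g h
    have h2 := hjac₂ f g h
    simp only [LinearMap.add_apply, LinearMap.smul_apply, map_add, map_smul,
      smul_smul] at H
    have hmul : (l₁ * l₂) • (B₁ (B₂ f g) h + B₂ (B₁ f g) h + (B₁ (B₂ g h) f + B₂ (B₁ g h) f)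
        + (B₁ (B₂ h f) g + B₂ (B₁ h f) g)) = 0 := by
      linear_combination (norm := module) H - (l₁ * l₁) • h1 - (l₂ * l₂) • h2
    rcases smul_eq_zero.mp hmul with h | h
    · exact absurd h (mul_ne_zero hl₁ hl₂)
    · exact h
  intro m₁ m₂ f g h
  have h1 := hjac₁ f g h
  have h2 := hjac₂ f g h
  have h3 := key f g h
  simp only [LinearMap.add_apply, LinearMap.smul_apply, map_add, map_smul, smul_smul]
  linear_combination (norm := module) (m₁ * m₁) • h1 + (m₂ * m₂) • h2 + (m₁ * m₂) • h3
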